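/- Let S₁, …, S_H be disjoint Borel subsets of ℝ covering the range of Y with w_h = P(Y ∈ S_h) > 0. Let γ₁ ∈ ℝ^p be a unit vector, P = γ₁γ₁ᵀ, β₁ = a γ₁ with a ≠ 0, b_h = c_h γ₁ for scalars c_h, and λ₁ ≠ 0. Assume: (i) Y = f(β₁ᵀX, ε) for measurable f with ε independent of X; (ii) E[X | σ(β₁ᵀX)] = μ + Σβ₁(β₁ᵀΣβ₁)⁻¹β₁ᵀ(X − μ) almost surely; (iii) Var(X | σ(β₁ᵀX)) = Σ − Σβ₁(β₁ᵀΣβ₁)⁻¹β₁ᵀΣ almost surely; and the required moments are finite. Define μ_h = E[X | Y ∈ S_h], μ_{y,h} = E[Y | Y ∈ S_h], R_h = Y − μ_{y,h} − b_hᵀ(X − μ_h), and the random vector IF = (1/λ₁) Σ_{h=1}^{H} 1{Y ∈ S_h} R_h (I_p − P) Σ⁻¹ (X − μ) (b_hᵀγ₁). Then E[IF · IFᵀ] = (1/λ₁²) Σ_{h=1}^{H} w_h (b_hᵀγ₁)² E[R_h² | Y ∈ S_h] (I_p − P) Σ⁻¹ (I_p − P). -/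

import Mathlib

open MeasureTheory ProbabilityTheory Matrix

section Aux

lemma aux_int_mul {Ω : Type*} [M0 : MeasurableSpace Ω] {P : Measure Ω} {f g : Ω → ℝ}
    (hf : MemLp f 2 P) (hg : MemLp g 2 P) :
    Integrable (fun ω => f ω * g ω) P := by
  have h : MemLp (f • g) 1 P := hg.smul hf
  rw [memLp_one_iff_integrable] at h
  exact h

open MeasurableSpace in
lemma aux_indep_integral {Ω E : Type*} [M0 : MeasurableSpace Ω] [ME : MeasurableSpace E]
    (P : Measure Ω) [IsProbabilityMeasure P]
    (X : Ω → E) (hX : Measurable X) (L : E → ℝ) (hL : Measurable L)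
    (e : Ω → ℝ) (he : Measurable e) (hindep : IndepFun X e P)
    (W : E → ℝ) (hW : Measurable W) (hWint : Integrable (fun ω => W (X ω)) P)
    (cst : ℝ)
    (hc : P[(fun ω => W (X ω)) | MeasurableSpace.comap (fun ω => L (X ω)) inferInstance]
      =ᵐ[P] fun _ => cst)
    (Z : Ω → ℝ)
    (hZ : StronglyMeasurable[MeasurableSpace.comap (fun ω => (L (X ω), e ω)) inferInstance] Z)
    (hZW : Integrable (fun ω => Z ω * W (X ω)) P) :
    ∫ ω, Z ω * W (X ω) ∂P = cst * ∫ ω, Z ω ∂P := by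
  have hpair : Measurable fun ω => (L (X ω), e ω) := (hL.comp hX).prodMk he
  have hm' : MeasurableSpace.comap (fun ω => (L (X ω), e ω)) inferInstance ≤ M0 :=
    hpair.comap_le
  haveI : SigmaFinite (P.trim hm') := inferInstance
  have hmle : MeasurableSpace.comap (fun ω => L (X ω)) inferInstance ≤ M0 :=
    (hL.comp hX).comap_le
  haveI : SigmaFinite (P.trim hmle) := inferInstance
  have htot : ∫ ω, W (X ω) ∂P = cst := by
    rw [← integral_condExp hmle (f := fun ω => W (X ω)), integral_congr_ae hc]
    simp
  -- key set-integral identity on all m'-measurable sets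
  have key : ∀ s : Set Ω,
      MeasurableSet[MeasurableSpace.comap (fun ω => (L (X ω), e ω)) inferInstance] s →
      ∫ ω in s, W (X ω) ∂P = cst * (P s).toReal := by
    have h1 : MeasurableSpace.comap (fun ω => (L (X ω), e ω))
          (inferInstance : MeasurableSpace (ℝ × ℝ)) = MeasurableSpace.generateFrom
        ((fun s => (fun ω => (L (X ω), e ω)) ⁻¹' s) ''
          (Set.image2 (· ×ˢ ·) { s : Set ℝ | MeasurableSet s } { t : Set ℝ | MeasurableSet t })) := by
      conv_lhs => rw [show (inferInstance : MeasurableSpace (ℝ × ℝ))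
        = Prod.instMeasurableSpace from rfl, ← generateFrom_prod]
      rw [comap_generateFrom]
    have hpi : IsPiSystem ((fun s => (fun ω => (L (X ω), e ω)) ⁻¹' s) ''
        (Set.image2 (· ×ˢ ·) { s : Set ℝ | MeasurableSet s } { t : Set ℝ | MeasurableSet t })) := by
      have := isPiSystem_prod.comap (fun ω => (L (X ω), e ω))
      convert this using 1
      rfl
    refine MeasurableSpace.induction_on_inter
      (m := MeasurableSpace.comap (fun ω => (L (X ω), e ω)) inferInstance) h1 hpi ?_ ?_ ?_ ?_
    · simp
    · rintro t ⟨u, ⟨A, hA, B, hB, rfl⟩, rfl⟩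
      simp only [Set.mem_setOf_eq] at hA hB
      have hpre : (fun ω => (L (X ω), e ω)) ⁻¹' (A ×ˢ B)
          = ((fun ω => L (X ω)) ⁻¹' A) ∩ (e ⁻¹' B) := by
        ext ω; simp [Set.mem_prod]
      show ∫ ω in (fun ω => (L (X ω), e ω)) ⁻¹' (A ×ˢ B), W (X ω) ∂P
        = cst * (P ((fun ω => (L (X ω), e ω)) ⁻¹' (A ×ˢ B))).toReal
      rw [hpre]
      have hsA : MeasurableSet ((fun ω => L (X ω)) ⁻¹' A) := (hL.comp hX) hA
      have hsB : MeasurableSet (e ⁻¹' B) := he hB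
      have hUind : IndepFun (fun ω => ((L ⁻¹' A).indicator W) (X ω))
          (fun ω => (B.indicator (fun _ => (1:ℝ))) (e ω)) P :=
        hindep.comp (hW.indicator (hL hA)) (measurable_const.indicator hB)
      have hUint : Integrable (fun ω => ((L ⁻¹' A).indicator W) (X ω)) P := by
        have heq : (fun ω => ((L ⁻¹' A).indicator W) (X ω))
            = ((fun ω => L (X ω)) ⁻¹' A).indicator (fun ω => W (X ω)) := by
          funext ω
          by_cases hω : L (X ω) ∈ A <;> simp [Set.indicator, hω]
        rw [heq]
        exact hWint.indicator hsA
      have hVint : Integrable (fun ω => (B.indicator (fun _ => (1:ℝ))) (e ω)) P := by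
        apply Integrable.mono' (integrable_const (1:ℝ))
        · exact ((measurable_const.indicator hB).comp he).aestronglyMeasurable
        · refine Filter.Eventually.of_forall fun ω => ?_
          by_cases hω : e ω ∈ B <;> simp [Set.indicator, hω]
      have hprod : ∫ ω, ((L ⁻¹' A).indicator W) (X ω) * (B.indicator (fun _ => (1:ℝ))) (e ω) ∂P
          = (∫ ω, ((L ⁻¹' A).indicator W) (X ω) ∂P) * ∫ ω, (B.indicator (fun _ => (1:ℝ))) (e ω) ∂P :=
        hUind.integral_mul_eq_mul_integral hUint.aestronglyMeasurable hVint.aestronglyMeasurable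
      have hlhs : ∫ ω in ((fun ω => L (X ω)) ⁻¹' A) ∩ (e ⁻¹' B), W (X ω) ∂P
          = ∫ ω, ((L ⁻¹' A).indicator W) (X ω) * (B.indicator (fun _ => (1:ℝ))) (e ω) ∂P := by
        rw [← integral_indicator (hsA.inter hsB)]
        congr 1
        funext ω
        by_cases h1 : L (X ω) ∈ A <;> by_cases h2 : e ω ∈ B <;>
          simp [Set.indicator, h1, h2]
      have hA_int : ∫ ω, ((L ⁻¹' A).indicator W) (X ω) ∂P
          = cst * (P ((fun ω => L (X ω)) ⁻¹' A)).toReal := by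
        have hrw : (fun ω => ((L ⁻¹' A).indicator W) (X ω))
            = ((fun ω => L (X ω)) ⁻¹' A).indicator (fun ω => W (X ω)) := by
          funext ω
          by_cases hω : L (X ω) ∈ A <;> simp [Set.indicator, hω]
        have hsm : MeasurableSet[MeasurableSpace.comap (fun ω => L (X ω)) inferInstance]
            ((fun ω => L (X ω)) ⁻¹' A) := ⟨A, hA, rfl⟩
        rw [hrw, integral_indicator hsA, ← setIntegral_condExp hmle hWint hsm,
          setIntegral_congr_ae hsA (hc.mono fun ω hω _ => hω), setIntegral_const]
        simp [mul_comm]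
        exact Or.inl rfl
      have hB_int : ∫ ω, (B.indicator (fun _ => (1:ℝ))) (e ω) ∂P = (P (e ⁻¹' B)).toReal := by
        have hrw : (fun ω => (B.indicator (fun _ => (1:ℝ))) (e ω))
            = (e ⁻¹' B).indicator (fun _ => (1:ℝ)) := by
          funext ω
          by_cases hω : e ω ∈ B <;> simp [Set.indicator, hω]
        rw [hrw, integral_indicator_const _ hsB]
        simp
        rfl
      have hmeas_inter : P (((fun ω => L (X ω)) ⁻¹' A) ∩ (e ⁻¹' B))
          = P ((fun ω => L (X ω)) ⁻¹' A) * P (e ⁻¹' B) := by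
        have := hindep.measure_inter_preimage_eq_mul (s := L ⁻¹' A) (t := B) (hL hA) hB
        exact this
      rw [hlhs, hprod, hA_int, hB_int, hmeas_inter, ENNReal.toReal_mul]
      ring
    · intro t htm' iht
      have ht : MeasurableSet[M0] t := hm' t htm'
      have hadd := integral_add_compl ht hWint
      have hcompl : (P tᶜ).toReal = 1 - (P t).toReal := by
        rw [measure_compl ht (measure_ne_top P t), measure_univ,
          ENNReal.toReal_sub_of_le prob_le_one ENNReal.one_ne_top, ENNReal.toReal_one]
      have hWc : ∫ ω in tᶜ, W (X ω) ∂P = (∫ ω, W (X ω) ∂P) - ∫ ω in t, W (X ω) ∂P := by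
        linarith [hadd]
      rw [hWc, htot, iht, hcompl]
      ring
    · intro g hgdisj hgmeas ihg
      have hgm : ∀ k, MeasurableSet[M0] (g k) := fun k => hm' _ (hgmeas k)
      rw [integral_iUnion hgm hgdisj hWint.integrableOn]
      rw [measure_iUnion hgdisj hgm, ENNReal.tsum_toReal_eq (fun k => measure_ne_top P _)]
      rw [tsum_congr ihg, tsum_mul_left]
  -- conclude the conditional expectation over m' is the constant
  have hc' : (fun _ : Ω => cst)
      =ᵐ[P] P[(fun ω => W (X ω)) | MeasurableSpace.comap (fun ω => (L (X ω), e ω)) inferInstance] := by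
    refine ae_eq_condExp_of_forall_setIntegral_eq hm' hWint
      (fun s _ hs => (integrableOn_const hs.ne))
      (fun s hs _ => ?_)
      (StronglyMeasurable.aestronglyMeasurable
        (stronglyMeasurable_const :
          StronglyMeasurable[MeasurableSpace.comap (fun ω => (L (X ω), e ω)) inferInstance]
            fun _ : Ω => cst))
    rw [key s hs, setIntegral_const]
    simp [mul_comm]
    exact Or.inl rfl
  -- pull-out property
  have hmul : P[(fun ω => Z ω * W (X ω)) |
        MeasurableSpace.comap (fun ω => (L (X ω), e ω)) inferInstance]
      =ᵐ[P] Z * P[(fun ω => W (X ω)) |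
        MeasurableSpace.comap (fun ω => (L (X ω), e ω)) inferInstance] :=
    condExp_mul_of_stronglyMeasurable_left hZ hZW hWint
  calc ∫ ω, Z ω * W (X ω) ∂P
      = ∫ ω, (P[(fun ω' => Z ω' * W (X ω')) |
          MeasurableSpace.comap (fun ω => (L (X ω), e ω)) inferInstance]) ω ∂P :=
        (integral_condExp hm' (f := fun ω' => Z ω' * W (X ω'))).symm
    _ = ∫ ω, Z ω * cst ∂P := by
        refine integral_congr_ae (hmul.trans ?_)
        filter_upwards [hc'] with ω hω
        simp [← hω]
    _ = cst * ∫ ω, Z ω ∂P := by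
        rw [integral_mul_const]
        ring

end Aux

/-- Theorem 3 of the paper: the asymptotic variance formula
`E[IF·IFᵀ] = (1/λ₁²) Σ_h w_h (b_hᵀγ₁)² E[R_h² | Y ∈ S_h] (I − P)Σ⁻¹(I − P)` for the
SWAR e.d.r. direction influence function in the single-index model. -/
theorem stmt_13 {Ω : Type*} [MeasurableSpace Ω] (P : Measure Ω) [IsProbabilityMeasure P]
    {p H : ℕ} (X : Ω → Fin p → ℝ) (hX : Measurable X)
    (hX2 : ∀ i, MemLp (fun ω => X ω i) 2 P)
    (Y : Ω → ℝ) (hY2 : MemLp Y 2 P)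
    (μ : Fin p → ℝ) (hμ : ∀ i, μ i = ∫ ω, X ω i ∂P)
    (Sig : Matrix (Fin p) (Fin p) ℝ)
    (hSig : ∀ i j, Sig i j = ∫ ω, (X ω i - μ i) * (X ω j - μ j) ∂P)
    (hSigInv : IsUnit Sig.det)
    -- disjoint slices covering the range of Y, with weights w_h = P(Y ∈ S_h) > 0
    (S : Fin H → Set ℝ) (hSm : ∀ h, MeasurableSet (S h))
    (hdisj : Pairwise (Function.onFun Disjoint S))
    (hcover : ∀ ω, ∃ h, Y ω ∈ S h)
    (w : Fin H → ℝ) (hw : ∀ h, w h = (P (Y ⁻¹' S h)).toReal) (hwpos : ∀ h, 0 < w h)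
    -- γ₁ unit, projection Pm = γ₁γ₁ᵀ, β₁ = a γ₁ (a ≠ 0), b_h = c_h γ₁, λ₁ ≠ 0
    (γ₁ : Fin p → ℝ) (hγ₁ : γ₁ ⬝ᵥ γ₁ = 1)
    (Pm : Matrix (Fin p) (Fin p) ℝ) (hPm : Pm = vecMulVec γ₁ γ₁)
    (a : ℝ) (ha : a ≠ 0) (β₁ : Fin p → ℝ) (hβ₁ : β₁ = a • γ₁)
    (c : Fin H → ℝ) (b : Fin H → (Fin p → ℝ)) (hb : ∀ h, b h = c h • γ₁)
    (lam₁ : ℝ) (hlam₁ : lam₁ ≠ 0)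
    -- (i) the single-index model with ε independent of X
    (f : ℝ → ℝ → ℝ) (hf : Measurable fun q : ℝ × ℝ => f q.1 q.2)
    (eps : Ω → ℝ) (heps : Measurable eps) (hindep : IndepFun X eps P)
    (hmodel : ∀ ω, Y ω = f (β₁ ⬝ᵥ X ω) (eps ω))
    -- (ii) E[X | σ(β₁ᵀX)] = μ + Σβ₁(β₁ᵀΣβ₁)⁻¹β₁ᵀ(X − μ) a.s.
    (hii : ∀ i, P[(fun ω => X ω i) | MeasurableSpace.comap (fun ω => β₁ ⬝ᵥ X ω) inferInstance]
      =ᵐ[P] fun ω => μ i + (β₁ ⬝ᵥ (Sig *ᵥ β₁))⁻¹ * (β₁ ⬝ᵥ (X ω - μ)) * (Sig *ᵥ β₁) i)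
    -- (iii) Var(X | σ(β₁ᵀX)) = Σ − Σβ₁(β₁ᵀΣβ₁)⁻¹β₁ᵀΣ a.s.
    (hiii : ∀ i j,
      P[(fun ω =>
          (X ω i - (P[(fun ω' => X ω' i) |
            MeasurableSpace.comap (fun ω'' => β₁ ⬝ᵥ X ω'') inferInstance]) ω) *
          (X ω j - (P[(fun ω' => X ω' j) |
            MeasurableSpace.comap (fun ω'' => β₁ ⬝ᵥ X ω'') inferInstance]) ω)) |
        MeasurableSpace.comap (fun ω'' => β₁ ⬝ᵥ X ω'') inferInstance]
      =ᵐ[P] fun _ => Sig i j - (β₁ ⬝ᵥ (Sig *ᵥ β₁))⁻¹ * (Sig *ᵥ β₁) i * (Sig *ᵥ β₁) j)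
    -- slice conditional means, residuals and the influence function
    (μh : Fin H → Fin p → ℝ) (hμh : ∀ h i, μh h i = ∫ ω, X ω i ∂(P[|Y ⁻¹' S h]))
    (μyh : Fin H → ℝ) (hμyh : ∀ h, μyh h = ∫ ω, Y ω ∂(P[|Y ⁻¹' S h]))
    (Rh : Fin H → Ω → ℝ) (hRh : ∀ h ω, Rh h ω = Y ω - μyh h - b h ⬝ᵥ (X ω - μh h))
    (IF : Ω → Fin p → ℝ)
    (hIF : ∀ ω, IF ω = (1 / lam₁) •
      ∑ h, (((Y ⁻¹' S h).indicator (fun _ => (1 : ℝ)) ω) * Rh h ω * (b h ⬝ᵥ γ₁)) •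
        ((1 - Pm) *ᵥ (Sig⁻¹ *ᵥ (X ω - μ))))
    -- the required moments are finite
    (hIFint : ∀ i j, Integrable (fun ω => IF ω i * IF ω j) P)
    (hRint : ∀ h, Integrable (fun ω => Rh h ω ^ 2) (P[|Y ⁻¹' S h])) :
    ∀ i j, (∫ ω, IF ω i * IF ω j ∂P) =
      (1 / lam₁ ^ 2) * ∑ h, w h * (b h ⬝ᵥ γ₁) ^ 2 * (∫ ω, Rh h ω ^ 2 ∂(P[|Y ⁻¹' S h])) *
        (((1 - Pm) * Sig⁻¹ * (1 - Pm)) i j) := by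
  intro i j
  -- basic measurability
  have hT : Measurable fun ω => β₁ ⬝ᵥ X ω := by
    have hrw : (fun ω => β₁ ⬝ᵥ X ω) = fun ω => ∑ k, β₁ k * X ω k := rfl
    rw [hrw]
    exact Finset.measurable_sum _ fun k _ => ((measurable_pi_apply k).comp hX).const_mul _
  have hYm : Measurable Y := by
    have hrw : Y = fun ω => f (β₁ ⬝ᵥ X ω) (eps ω) := funext hmodel
    rw [hrw]
    exact hf.comp (hT.prodMk heps)
  have hYS : ∀ h, MeasurableSet (Y ⁻¹' S h) := fun h => hYm (hSm h)
  -- matrix algebra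
  set A : Matrix (Fin p) (Fin p) ℝ := (1 - Pm) * Sig⁻¹ with hA
  set σv : Fin p → ℝ := Sig *ᵥ β₁ with hσv
  set κ : ℝ := (β₁ ⬝ᵥ σv)⁻¹ with hκ
  set v : Ω → Fin p → ℝ := fun ω => A *ᵥ (X ω - μ) with hv
  set Mc : ℝ := ((1 - Pm) * Sig⁻¹ * (1 - Pm)) i j with hMc
  have hsymSig : Sig.transpose = Sig := by
    ext k l
    rw [Matrix.transpose_apply, hSig, hSig]
    exact integral_congr_ae (Filter.Eventually.of_forall fun ω => mul_comm _ _)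
  have hPmT : Pm.transpose = Pm := by
    rw [hPm]; ext k l
    simp [Matrix.transpose_apply, Matrix.vecMulVec_apply, mul_comm]
  have hγ₁' : ∑ l, γ₁ l * γ₁ l = (1:ℝ) := hγ₁
  have hPmγ : Pm *ᵥ γ₁ = γ₁ := by
    funext k
    rw [hPm]
    simp only [Matrix.mulVec, dotProduct, Matrix.vecMulVec_apply]
    rw [show ∑ l, γ₁ k * γ₁ l * γ₁ l = γ₁ k * ∑ l, γ₁ l * γ₁ l by
      rw [Finset.mul_sum]; exact Finset.sum_congr rfl fun l _ => by ring]
    rw [hγ₁', mul_one]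
  have hProjβ : (1 - Pm) *ᵥ β₁ = 0 := by
    rw [hβ₁, Matrix.mulVec_smul, Matrix.sub_mulVec, Matrix.one_mulVec, hPmγ, sub_self, smul_zero]
  have hAσ : A *ᵥ σv = 0 := by
    have hAS : A * Sig = 1 - Pm := by
      rw [hA, mul_assoc, Matrix.nonsing_inv_mul Sig hSigInv, mul_one]
    rw [hσv, Matrix.mulVec_mulVec, hAS, hProjβ]
  have hAσ' : ∀ r, ∑ k, A r k * σv k = 0 := by
    intro r
    have h0 := congrFun hAσ r
    simpa [Matrix.mulVec, dotProduct] using h0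
  have hASA : A * Sig * A.transpose = (1 - Pm) * Sig⁻¹ * (1 - Pm) := by
    have hAT : A.transpose = Sig⁻¹ * (1 - Pm) := by
      rw [hA, Matrix.transpose_mul, Matrix.transpose_sub, Matrix.transpose_one, hPmT,
        Matrix.transpose_nonsing_inv, hsymSig]
    rw [hAT, hA, mul_assoc ((1 - Pm) * Sig⁻¹) Sig (Sig⁻¹ * (1 - Pm)),
      ← mul_assoc Sig Sig⁻¹ (1 - Pm), Matrix.mul_nonsing_inv Sig hSigInv, Matrix.one_mul]
  -- L² facts
  have hXkL2 : ∀ k : Fin p, MemLp (fun ω => X ω k - μ k) 2 P := fun k =>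
    (hX2 k).sub (memLp_const (μ k))
  have hdotL2 : MemLp (fun ω => β₁ ⬝ᵥ (X ω - μ)) 2 P := by
    have hrw : (fun ω => β₁ ⬝ᵥ (X ω - μ)) = fun ω => ∑ k, β₁ k * (X ω k - μ k) := rfl
    rw [hrw]
    exact memLp_finsetSum _ fun k _ => (hXkL2 k).const_mul _
  set φ : Fin p → Ω → ℝ := fun k ω => (X ω k - μ k) - κ * (β₁ ⬝ᵥ (X ω - μ)) * σv k with hφ
  have hφL2 : ∀ k, MemLp (φ k) 2 P := by
    intro k
    have h2 : MemLp (fun ω => κ * (β₁ ⬝ᵥ (X ω - μ)) * σv k) 2 P := by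
      rw [show (fun ω => κ * (β₁ ⬝ᵥ (X ω - μ)) * σv k)
        = fun ω => (κ * σv k) * (β₁ ⬝ᵥ (X ω - μ)) from funext fun ω => by ring]
      exact hdotL2.const_mul _
    exact (hXkL2 k).sub h2
  have hφint : ∀ k l, Integrable (fun ω => φ k ω * φ l ω) P := fun k l =>
    aux_int_mul (hφL2 k) (hφL2 l)
  have hvL2 : ∀ r, MemLp (fun ω => v ω r) 2 P := by
    intro r
    have hrw : (fun ω => v ω r) = fun ω => ∑ k, A r k * (X ω k - μ k) := by
      funext ω
      simp [hv, Matrix.mulVec, dotProduct]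
    rw [hrw]
    exact memLp_finsetSum _ fun k _ => (hXkL2 k).const_mul _
  have hvk : ∀ r ω, v ω r = ∑ k, A r k * (X ω k - μ k) := by
    intro r ω
    simp [hv, Matrix.mulVec, dotProduct]
  -- φ is a.e. the centered variable
  have hφae : ∀ k, φ k =ᵐ[P] fun ω => X ω k -
      (P[(fun ω' => X ω' k) |
        MeasurableSpace.comap (fun ω'' => β₁ ⬝ᵥ X ω'') inferInstance]) ω := by
    intro k
    filter_upwards [hii k] with ω hω
    rw [hω, hφ]
    ring
  have hcondφ : ∀ k l, P[(fun ω => φ k ω * φ l ω) |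
      MeasurableSpace.comap (fun ω'' => β₁ ⬝ᵥ X ω'') inferInstance]
      =ᵐ[P] fun _ => Sig k l - κ * σv k * σv l := by
    intro k l
    refine (condExp_congr_ae ?_).trans (hiii k l)
    filter_upwards [hφae k, hφae l] with ω h1 h2
    rw [h1, h2]
  -- pointwise identity for v in terms of φ
  have hvφ : ∀ r ω, v ω r = ∑ k, A r k * φ k ω := by
    intro r ω
    have hcalc : ∑ k, A r k * φ k ω
        = ∑ k, A r k * (X ω k - μ k) - (κ * (β₁ ⬝ᵥ (X ω - μ))) * ∑ k, A r k * σv k := by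
      rw [Finset.mul_sum, ← Finset.sum_sub_distrib]
      exact Finset.sum_congr rfl fun k _ => by rw [hφ]; ring
    rw [hvk r ω, hcalc, hAσ' r, mul_zero, sub_zero]
  have hWeq : ∀ ω, v ω i * v ω j
      = ∑ q : Fin p × Fin p, (A i q.1 * A j q.2) * (φ q.1 ω * φ q.2 ω) := by
    intro ω
    rw [hvφ i ω, hvφ j ω, Finset.sum_mul_sum, Fintype.sum_prod_type]
    exact Finset.sum_congr rfl fun k _ => Finset.sum_congr rfl fun l _ => by ring
  -- the constant
  have halg : ∑ q : Fin p × Fin p, (A i q.1 * A j q.2) * (Sig q.1 q.2 - κ * σv q.1 * σv q.2)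
      = Mc := by
    have hentry : (A * Sig * A.transpose) i j = ∑ k, ∑ l, A i k * Sig k l * A j l := by
      rw [Matrix.mul_apply]
      simp_rw [Matrix.mul_apply, Matrix.transpose_apply, Finset.sum_mul]
      exact Finset.sum_comm
    rw [Fintype.sum_prod_type]
    calc ∑ k, ∑ l, (A i k * A j l) * (Sig k l - κ * σv k * σv l)
        = ∑ k, ((∑ l, A i k * Sig k l * A j l) - (κ * (A i k * σv k)) * ∑ l, A j l * σv l) := by
          refine Finset.sum_congr rfl fun k _ => ?_
          rw [Finset.mul_sum, ← Finset.sum_sub_distrib]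
          exact Finset.sum_congr rfl fun l _ => by ring
      _ = ∑ k, ∑ l, A i k * Sig k l * A j l := by
          refine Finset.sum_congr rfl fun k _ => ?_
          rw [hAσ' j, mul_zero, sub_zero]
      _ = Mc := by rw [← hentry, hASA, hMc]
  -- conditional expectation of v_i v_j is the constant Mc
  have hcondW : P[(fun ω => v ω i * v ω j) |
      MeasurableSpace.comap (fun ω'' => β₁ ⬝ᵥ X ω'') inferInstance] =ᵐ[P] fun _ => Mc := by
    have hfun : (fun ω => v ω i * v ω j)
        = ∑ q : Fin p × Fin p, (fun ω => (A i q.1 * A j q.2) • (φ q.1 ω * φ q.2 ω)) := by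
      funext ω
      rw [Finset.sum_apply, hWeq ω]
      exact Finset.sum_congr rfl fun q _ => by simp [smul_eq_mul]
    rw [hfun]
    refine (condExp_finset_sum (fun q _ => ?_) _).trans ?_
    · exact ((hφint q.1 q.2).smul (A i q.1 * A j q.2) : Integrable
        ((A i q.1 * A j q.2) • fun ω => φ q.1 ω * φ q.2 ω) P)
    · have hq : ∀ q : Fin p × Fin p,
          P[(fun ω => (A i q.1 * A j q.2) • (φ q.1 ω * φ q.2 ω)) |
            MeasurableSpace.comap (fun ω'' => β₁ ⬝ᵥ X ω'') inferInstance]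
          =ᵐ[P] fun _ => (A i q.1 * A j q.2) * (Sig q.1 q.2 - κ * σv q.1 * σv q.2) := by
        intro q
        refine Filter.EventuallyEq.trans (condExp_smul (A i q.1 * A j q.2)
          (fun ω => φ q.1 ω * φ q.2 ω) _) ?_
        filter_upwards [hcondφ q.1 q.2] with ω hω
        simp only [Pi.smul_apply, hω, smul_eq_mul]
      have hall : ∀ᵐ ω ∂P, ∀ q : Fin p × Fin p,
          (P[(fun ω' => (A i q.1 * A j q.2) • (φ q.1 ω' * φ q.2 ω')) |
            MeasurableSpace.comap (fun ω'' => β₁ ⬝ᵥ X ω'') inferInstance]) ω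
          = (A i q.1 * A j q.2) * (Sig q.1 q.2 - κ * σv q.1 * σv q.2) := ae_all_iff.2 hq
      filter_upwards [hall] with ω hω
      rw [Finset.sum_apply]
      rw [Finset.sum_congr rfl fun q _ => hω q, halg]
  -- collapse of indicator sums
  have hcollapse : ∀ ω (h0 : Fin H), Y ω ∈ S h0 → ∀ t : Fin H → ℝ,
      ∑ h, (Y ⁻¹' S h).indicator (fun _ => (1:ℝ)) ω * t h = t h0 := by
    intro ω h0 hh0 t
    rw [Finset.sum_eq_single h0]
    · rw [Set.indicator_of_mem (show ω ∈ Y ⁻¹' S h0 from hh0), one_mul]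
    · intro h' _ hne
      have hnm : Y ω ∉ S h' := fun hm => (Set.disjoint_left.1 (hdisj hne) hm hh0).elim
      rw [Set.indicator_of_notMem (show ω ∉ Y ⁻¹' S h' from hnm), zero_mul]
    · exact fun hmem => absurd (Finset.mem_univ h0) hmem
  -- pointwise expansions of IF
  have hIFapply : ∀ ω (r : Fin p), IF ω r = (1 / lam₁) *
      ∑ h, (Y ⁻¹' S h).indicator (fun _ => (1:ℝ)) ω * (Rh h ω * (b h ⬝ᵥ γ₁) * v ω r) := by
    intro ω r
    rw [hIF ω]
    simp only [Pi.smul_apply, Finset.sum_apply, smul_eq_mul]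
    congr 1
    refine Finset.sum_congr rfl fun h _ => ?_
    rw [hv, Matrix.mulVec_mulVec, hA]
    ring
  have hprod_pt : ∀ ω, IF ω i * IF ω j = (1 / lam₁ ^ 2) *
      ∑ h, (Y ⁻¹' S h).indicator (fun _ => (1:ℝ)) ω *
        (Rh h ω ^ 2 * ((b h ⬝ᵥ γ₁) ^ 2 * (v ω i * v ω j))) := by
    intro ω
    obtain ⟨h0, hh0⟩ := hcover ω
    rw [hIFapply ω i, hIFapply ω j, mul_mul_mul_comm,
      hcollapse ω h0 hh0, hcollapse ω h0 hh0, hcollapse ω h0 hh0]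
    rw [div_mul_div_comm, one_mul, sq]
    ring
  -- per-slice pointwise identity for the indicator of the product
  have hgh_eq : ∀ (h : Fin H) ω, (Y ⁻¹' S h).indicator (fun ω' => IF ω' i * IF ω' j) ω
      = (1 / lam₁ ^ 2) * ((b h ⬝ᵥ γ₁) ^ 2 *
        (((Y ⁻¹' S h).indicator (fun _ => (1:ℝ)) ω * Rh h ω ^ 2) * (v ω i * v ω j))) := by
    intro h ω
    by_cases hω : Y ω ∈ S h
    · rw [Set.indicator_of_mem (show ω ∈ Y ⁻¹' S h from hω), hprod_pt ω, hcollapse ω h hω, Set.indicator_of_mem (show ω ∈ Y ⁻¹' S h from hω)]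
      ring
    · rw [Set.indicator_of_notMem (show ω ∉ Y ⁻¹' S h from hω), Set.indicator_of_notMem (show ω ∉ Y ⁻¹' S h from hω)]
      ring
  -- strong measurability of the slice residual factor w.r.t. σ(β₁ᵀX, ε)
  have hZsm : ∀ h : Fin H, StronglyMeasurable[MeasurableSpace.comap
      (fun ω => (β₁ ⬝ᵥ X ω, eps ω)) inferInstance]
      (fun ω => (Y ⁻¹' S h).indicator (fun _ => (1:ℝ)) ω * Rh h ω ^ 2) := by
    intro h
    apply Measurable.stronglyMeasurable
    have hpairm : Measurable[MeasurableSpace.comap (fun ω => (β₁ ⬝ᵥ X ω, eps ω)) inferInstance]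
        (fun ω => (β₁ ⬝ᵥ X ω, eps ω)) := measurable_iff_comap_le.2 le_rfl
    have hTm' : Measurable[MeasurableSpace.comap (fun ω => (β₁ ⬝ᵥ X ω, eps ω)) inferInstance]
        (fun ω => β₁ ⬝ᵥ X ω) := measurable_fst.comp hpairm
    have hem' : Measurable[MeasurableSpace.comap (fun ω => (β₁ ⬝ᵥ X ω, eps ω)) inferInstance]
        eps := measurable_snd.comp hpairm
    have hYm' : Measurable[MeasurableSpace.comap (fun ω => (β₁ ⬝ᵥ X ω, eps ω)) inferInstance]
        Y := by
      rw [show Y = fun ω => f (β₁ ⬝ᵥ X ω) (eps ω) from funext hmodel]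
      exact hf.comp (hTm'.prodMk hem')
    have hRm' : Measurable[MeasurableSpace.comap (fun ω => (β₁ ⬝ᵥ X ω, eps ω)) inferInstance]
        (Rh h) := by
      have hrw : Rh h = fun ω => Y ω - μyh h -
          (c h * (a⁻¹ * (β₁ ⬝ᵥ X ω)) - c h * (γ₁ ⬝ᵥ μh h)) := by
        funext ω
        rw [hRh h ω, hb h]
        have hax : γ₁ ⬝ᵥ X ω = a⁻¹ * (β₁ ⬝ᵥ X ω) := by
          rw [hβ₁, smul_dotProduct, smul_eq_mul, ← mul_assoc, inv_mul_cancel₀ ha, one_mul]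
        rw [smul_dotProduct, smul_eq_mul, dotProduct_sub, hax]
        ring
      rw [hrw]
      exact (hYm'.sub measurable_const).sub
        ((measurable_const.mul (measurable_const.mul hTm')).sub measurable_const)
    have hindm' : Measurable[MeasurableSpace.comap (fun ω => (β₁ ⬝ᵥ X ω, eps ω)) inferInstance]
        (fun ω => (Y ⁻¹' S h).indicator (fun _ => (1:ℝ)) ω) := by
      have hrw : (fun ω => (Y ⁻¹' S h).indicator (fun _ => (1:ℝ)) ω)
          = fun ω => (S h).indicator (fun _ => (1:ℝ)) (Y ω) := by
        funext ω
        by_cases hω : Y ω ∈ S h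
        · rw [Set.indicator_of_mem (show ω ∈ Y ⁻¹' S h from hω), Set.indicator_of_mem hω]
        · rw [Set.indicator_of_notMem (show ω ∉ Y ⁻¹' S h from hω),
            Set.indicator_of_notMem hω]
      rw [hrw]
      exact (measurable_const.indicator (hSm h)).comp hYm'
    exact hindm'.mul (hRm'.pow_const 2)
  -- splitting the integral over slices
  have hgh_int : ∀ h : Fin H,
      Integrable ((Y ⁻¹' S h).indicator (fun ω => IF ω i * IF ω j)) P := fun h =>
    (hIFint i j).indicator (hYS h)
  have hsplit : ∫ ω, IF ω i * IF ω j ∂P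
      = ∑ h, ∫ ω, (Y ⁻¹' S h).indicator (fun ω' => IF ω' i * IF ω' j) ω ∂P := by
    rw [← integral_finset_sum Finset.univ fun h _ => hgh_int h]
    refine integral_congr_ae (Filter.Eventually.of_forall fun ω => ?_)
    show IF ω i * IF ω j = ∑ h, (Y ⁻¹' S h).indicator (fun ω' => IF ω' i * IF ω' j) ω
    rw [hprod_pt ω, Finset.mul_sum]
    refine Finset.sum_congr rfl fun h _ => ?_
    rw [hgh_eq h ω]
    ring
  -- relating the slice integral to the conditional measure
  have hZint_eval : ∀ h : Fin H,
      ∫ ω, (Y ⁻¹' S h).indicator (fun _ => (1:ℝ)) ω * Rh h ω ^ 2 ∂P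
      = w h * ∫ ω, Rh h ω ^ 2 ∂(P[|Y ⁻¹' S h]) := by
    intro h
    have h1 : (fun ω => (Y ⁻¹' S h).indicator (fun _ => (1:ℝ)) ω * Rh h ω ^ 2)
        = (Y ⁻¹' S h).indicator (fun ω => Rh h ω ^ 2) := by
      funext ω
      by_cases hω : Y ω ∈ S h
      · rw [Set.indicator_of_mem (show ω ∈ Y ⁻¹' S h from hω),
          Set.indicator_of_mem (show ω ∈ Y ⁻¹' S h from hω), one_mul]
      · rw [Set.indicator_of_notMem (show ω ∉ Y ⁻¹' S h from hω),
          Set.indicator_of_notMem (show ω ∉ Y ⁻¹' S h from hω), zero_mul]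
    have hne : (P (Y ⁻¹' S h)).toReal ≠ 0 := by
      rw [← hw h]; exact (hwpos h).ne'
    rw [h1, integral_indicator (hYS h),
      show P[|Y ⁻¹' S h] = (P (Y ⁻¹' S h))⁻¹ • P.restrict (Y ⁻¹' S h) from rfl,
      integral_smul_measure, ENNReal.toReal_inv, smul_eq_mul, hw h, ← mul_assoc,
      mul_inv_cancel₀ hne, one_mul]
  -- the core independence step
  have hcore : ∀ h : Fin H, (b h ⬝ᵥ γ₁) ≠ 0 →
      ∫ ω, ((Y ⁻¹' S h).indicator (fun _ => (1:ℝ)) ω * Rh h ω ^ 2) * (v ω i * v ω j) ∂P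
      = Mc * ∫ ω, (Y ⁻¹' S h).indicator (fun _ => (1:ℝ)) ω * Rh h ω ^ 2 ∂P := by
    intro h hbγ
    have hψm : Measurable (fun x : Fin p → ℝ => (A *ᵥ (x - μ)) i * (A *ᵥ (x - μ)) j) := by
      have hcomp : ∀ r : Fin p, Measurable (fun x : Fin p → ℝ => (A *ᵥ (x - μ)) r) := by
        intro r
        have hrw : (fun x : Fin p → ℝ => (A *ᵥ (x - μ)) r)
            = fun x => ∑ k, A r k * (x k - μ k) := by
          funext x
          simp [Matrix.mulVec, dotProduct]
        rw [hrw]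
        exact Finset.measurable_sum _ fun k _ =>
          ((measurable_pi_apply k).sub measurable_const).const_mul _
      exact (hcomp i).mul (hcomp j)
    have hLm : Measurable (fun x : Fin p → ℝ => β₁ ⬝ᵥ x) := by
      have hrw : (fun x : Fin p → ℝ => β₁ ⬝ᵥ x) = fun x => ∑ k, β₁ k * x k := rfl
      rw [hrw]
      exact Finset.measurable_sum _ fun k _ => (measurable_pi_apply k).const_mul _
    have hWint' : Integrable (fun ω => (A *ᵥ (X ω - μ)) i * (A *ᵥ (X ω - μ)) j) P :=
      aux_int_mul (hvL2 i) (hvL2 j)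
    have hZWint : Integrable (fun ω =>
        ((Y ⁻¹' S h).indicator (fun _ => (1:ℝ)) ω * Rh h ω ^ 2) * (v ω i * v ω j)) P := by
      have hrw : (fun ω =>
          ((Y ⁻¹' S h).indicator (fun _ => (1:ℝ)) ω * Rh h ω ^ 2) * (v ω i * v ω j))
          = fun ω => (lam₁ ^ 2 * ((b h ⬝ᵥ γ₁) ^ 2)⁻¹) *
            (Y ⁻¹' S h).indicator (fun ω' => IF ω' i * IF ω' j) ω := by
        funext ω
        rw [hgh_eq h ω]
        field_simp
      rw [hrw]
      exact (hgh_int h).const_mul _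
    exact aux_indep_integral P X hX (fun x => β₁ ⬝ᵥ x) hLm eps heps hindep
      (fun x => (A *ᵥ (x - μ)) i * (A *ᵥ (x - μ)) j) hψm hWint' Mc hcondW
      (fun ω => (Y ⁻¹' S h).indicator (fun _ => (1:ℝ)) ω * Rh h ω ^ 2) (hZsm h) hZWint
  -- final assembly
  rw [hsplit, Finset.mul_sum]
  refine Finset.sum_congr rfl fun h _ => ?_
  by_cases hbγ : (b h ⬝ᵥ γ₁) = 0
  · have hz : (Y ⁻¹' S h).indicator (fun ω => IF ω i * IF ω j) = fun _ => (0:ℝ) := by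
      funext ω
      rw [hgh_eq h ω, hbγ]
      ring
    rw [hz, hbγ]
    simp
  · have hint : ∫ ω, (Y ⁻¹' S h).indicator (fun ω' => IF ω' i * IF ω' j) ω ∂P
        = (1 / lam₁ ^ 2) * ((b h ⬝ᵥ γ₁) ^ 2 *
          ∫ ω, ((Y ⁻¹' S h).indicator (fun _ => (1:ℝ)) ω * Rh h ω ^ 2) * (v ω i * v ω j) ∂P) := by
      rw [← integral_const_mul, ← integral_const_mul]
      exact integral_congr_ae (Filter.Eventually.of_forall fun ω => by rw [hgh_eq h ω])
    rw [hint, hcore h hbγ, hZint_eval h]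
    ring
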